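/- Let 0 < ε < 1/2, let k ≥ 2 be an integer, and let n be an integer with n > 200k²/ε. Let p = (1 − 0.8ε)·(k−2)!/n^{k−1} and fix a vertex v ∈ {1,…,n}. Then in the random hypergraph H_{n,p;k}, the probability that the connected component containing v has more than (16k/ε²)·log n vertices is less than n^{−2}. -/

import Mathlib

open scoped Classical

/-- Two vertices touch if some hyperedge of `E` contains both. -/
def Touches {V : Type*} (E : Finset (Finset V)) (v w : V) : Prop :=
  ∃ e ∈ E, v ∈ e ∧ w ∈ e

/-- The connected component of a vertex `v`. -/
def component {V : Type*} (E : Finset (Finset V)) (v : V) : Set V :=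
  {w | Relation.ReflTransGen (Touches E) v w}

/-- `H` is `k`-uniform: every hyperedge has exactly `k` vertices. -/
def IsUniform (k : ℕ) {n : ℕ} (H : Finset (Finset (Fin n))) : Prop :=
  ∀ e ∈ H, e.card = k

/-- The probability of the event `A` under `H_{n,p;k}`, the random `k`-uniform hypergraph
on `{1,…,n}` in which each of the `C(n,k)` possible hyperedges appears independently with
probability `p`. -/
noncomputable def probHnp (n k : ℕ) (p : ℝ) (A : Finset (Finset (Fin n)) → Prop) : ℝ :=
  ∑ H : Finset (Finset (Fin n)),
    if IsUniform k H ∧ A H then p ^ H.card * (1 - p) ^ (Nat.choose n k - H.card) else 0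

set_option linter.unusedSectionVars false
set_option maxHeartbeats 1000000

section Generic
variable {α : Type*} [DecidableEq α]

/-- Bernoulli product measure on subsets of `R`. -/
noncomputable def mu (p : ℝ) (R : Finset α) (A : Finset α → Prop) : ℝ :=
  ∑ H ∈ R.powerset, if A H then p ^ H.card * (1 - p) ^ (R.card - H.card) else 0

lemma mu_congr {p : ℝ} {R : Finset α} {A B : Finset α → Prop}
    (h : ∀ H ∈ R.powerset, (A H ↔ B H)) : mu p R A = mu p R B := by
  unfold mu
  exact Finset.sum_congr rfl fun H hH => by rw [if_congr (h H hH) rfl rfl]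

lemma mu_insert {p : ℝ} {s : Finset α} {a : α} (ha : a ∉ s) (A : Finset α → Prop) :
    mu p (insert a s) A = p * mu p s (fun H => A (insert a H))
      + (1 - p) * mu p s A := by
  have hcard : (insert a s).card = s.card + 1 := Finset.card_insert_of_notMem ha
  unfold mu
  rw [Finset.sum_powerset_insert ha, Finset.mul_sum, Finset.mul_sum, add_comm]
  congr 1
  · apply Finset.sum_congr rfl
    intro H hH
    have hHsub : H ⊆ s := Finset.mem_powerset.1 hH
    have hcle : H.card ≤ s.card := Finset.card_le_card hHsub
    have haH : a ∉ H := fun h => ha (hHsub h)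
    have hci : (insert a H).card = H.card + 1 := Finset.card_insert_of_notMem haH
    by_cases hA : A (insert a H)
    · rw [if_pos hA, if_pos hA, hci, hcard]
      rw [show s.card + 1 - (H.card + 1) = s.card - H.card by omega]
      ring
    · rw [if_neg hA, if_neg hA, mul_zero]
  · apply Finset.sum_congr rfl
    intro H hH
    have hHsub : H ⊆ s := Finset.mem_powerset.1 hH
    have hcle : H.card ≤ s.card := Finset.card_le_card hHsub
    by_cases hA : A H
    · rw [if_pos hA, if_pos hA, hcard]
      rw [show s.card + 1 - H.card = (s.card - H.card) + 1 by omega]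
      ring
    · rw [if_neg hA, if_neg hA, mul_zero]

lemma mu_true (p : ℝ) (R : Finset α) : mu p R (fun _ => True) = 1 := by
  induction R using Finset.induction_on with
  | empty => simp [mu]
  | insert _ _ ha ih =>
    rw [mu_insert ha]
    simp only [ih]; ring

lemma mu_nonneg {p : ℝ} (h0 : 0 ≤ p) (h1 : p ≤ 1) (R : Finset α) (A : Finset α → Prop) :
    0 ≤ mu p R A := by
  apply Finset.sum_nonneg
  intro H _
  split
  · have : (0:ℝ) ≤ 1 - p := by linarith
    positivity
  · exact le_refl 0

lemma mu_mono {p : ℝ} (h0 : 0 ≤ p) (h1 : p ≤ 1) {R : Finset α} {A B : Finset α → Prop}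
    (h : ∀ H ∈ R.powerset, A H → B H) : mu p R A ≤ mu p R B := by
  apply Finset.sum_le_sum
  intro H hH
  by_cases hA : A H
  · rw [if_pos hA, if_pos (h H hH hA)]
  · rw [if_neg hA]
    split
    · have : (0:ℝ) ≤ 1 - p := by linarith
      positivity
    · exact le_refl 0

/-- Decision-tree strategy for adaptively querying coordinates. -/
inductive Strat (α : Type*) where
  | done : Strat α
  | query : α → Strat α → Strat α → Strat α

/-- Number of successes (queried coordinates present in `H`). -/
def runS : Strat α → Finset α → ℕ
  | .done, _ => 0
  | .query e t1 t2, H => if e ∈ H then 1 + runS t1 H else runS t2 H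

/-- Valid strategies: queries lie in `R`, no repeats along a branch, depth at most `q`. -/
inductive ValidS : Strat α → Finset α → ℕ → Prop where
  | done : ∀ R q, ValidS .done R q
  | query : ∀ {e t1 t2 R q}, e ∈ R → ValidS t1 (R.erase e) q → ValidS t2 (R.erase e) q →
      ValidS (.query e t1 t2) R (q + 1)

lemma ValidS_mono : ∀ {t : Strat α} {R R' : Finset α} {q q' : ℕ},
    ValidS t R q → R ⊆ R' → q ≤ q' → ValidS t R' q' := by
  intro t
  induction t with
  | done => intro _ _ _ _ _ _ _; exact ValidS.done _ _
  | query e t1 t2 ih1 ih2 =>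
    intro R R' q q' hv hsub hq
    cases hv with
    | query he hv1 hv2 =>
      obtain ⟨q₀, rfl⟩ : ∃ q₀, q' = q₀ + 1 := ⟨q' - 1, by omega⟩
      have hsub' : R.erase e ⊆ R'.erase e := Finset.erase_subset_erase e hsub
      exact ValidS.query (hsub he) (ih1 hv1 hsub' (by omega)) (ih2 hv2 hsub' (by omega))

lemma runS_congr : ∀ {t : Strat α} {R : Finset α} {q : ℕ} {H H' : Finset α},
    ValidS t R q → H ∩ R = H' ∩ R → runS t H = runS t H' := by
  intro t
  induction t with
  | done => intro _ _ _ _ _ _; rfl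
  | query e t1 t2 ih1 ih2 =>
    intro R q H H' hv hint
    cases hv with
    | query he hv1 hv2 =>
      have hmem : e ∈ H ↔ e ∈ H' := by
        constructor
        · intro h
          have : e ∈ H ∩ R := Finset.mem_inter.2 ⟨h, he⟩
          rw [hint] at this; exact (Finset.mem_inter.1 this).1
        · intro h
          have : e ∈ H' ∩ R := Finset.mem_inter.2 ⟨h, he⟩
          rw [← hint] at this; exact (Finset.mem_inter.1 this).1
      have hint' : H ∩ R.erase e = H' ∩ R.erase e := by
        ext x
        simp only [Finset.mem_inter, Finset.mem_erase]
        constructor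
        · rintro ⟨hx, hxe, hxR⟩
          have : x ∈ H' ∩ R := by rw [← hint]; exact Finset.mem_inter.2 ⟨hx, hxR⟩
          exact ⟨(Finset.mem_inter.1 this).1, hxe, hxR⟩
        · rintro ⟨hx, hxe, hxR⟩
          have : x ∈ H ∩ R := by rw [hint]; exact Finset.mem_inter.2 ⟨hx, hxR⟩
          exact ⟨(Finset.mem_inter.1 this).1, hxe, hxR⟩
      simp only [runS]
      by_cases hE : e ∈ H
      · rw [if_pos hE, if_pos (hmem.1 hE), ih1 hv1 hint']
      · rw [if_neg hE, if_neg (fun h => hE (hmem.2 h)), ih2 hv2 hint']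

/-- Upper tail of the binomial distribution, defined recursively. -/
noncomputable def binomTail (p : ℝ) : ℕ → ℕ → ℝ
  | 0, s => if s = 0 then 1 else 0
  | q + 1, s => p * binomTail p q (s - 1) + (1 - p) * binomTail p q s

lemma binomTail_nonneg {p : ℝ} (h0 : 0 ≤ p) (h1 : p ≤ 1) : ∀ q s, 0 ≤ binomTail p q s := by
  intro q
  induction q with
  | zero => intro s; unfold binomTail; split <;> norm_num
  | succ q ih =>
    intro s
    unfold binomTail
    have := ih (s - 1); have := ih s
    nlinarith

lemma binomTail_zero {p : ℝ} : ∀ q, binomTail p q 0 = 1 := by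
  intro q
  induction q with
  | zero => simp [binomTail]
  | succ q ih => unfold binomTail; simp [ih]

/-- Main domination lemma: the probability that a valid strategy with at most `q` queries
achieves at least `s` successes is at most the binomial tail. -/
lemma dom {p : ℝ} (h0 : 0 ≤ p) (h1 : p ≤ 1) :
    ∀ {t : Strat α} {R : Finset α} {q s : ℕ}, ValidS t R q →
      mu p R (fun H => s ≤ runS t H) ≤ binomTail p q s := by
  intro t
  induction t with
  | done =>
    intro R q s _
    rcases Nat.eq_zero_or_pos s with rfl | hs
    · rw [binomTail_zero]
      apply le_of_eq
      calc mu p R (fun H => 0 ≤ runS Strat.done H)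
          = mu p R (fun _ => True) := mu_congr (by simp)
        _ = 1 := mu_true p R
    · have : mu p R (fun H => s ≤ runS Strat.done H) = 0 := by
        unfold mu
        apply Finset.sum_eq_zero
        intro H _
        rw [if_neg]
        simp only [runS]; omega
      rw [this]
      exact binomTail_nonneg h0 h1 q s
  | query e t1 t2 ih1 ih2 =>
    intro R q s hv
    cases hv with
    | query he hv1 hv2 =>
      rename_i q'
      have hre : e ∉ R.erase e := Finset.notMem_erase e R
      conv_lhs => rw [← Finset.insert_erase he]
      rw [mu_insert hre]
      have key1 : mu p (R.erase e) (fun H => s ≤ runS (Strat.query e t1 t2) (insert e H))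
          ≤ binomTail p q' (s - 1) := by
        have : mu p (R.erase e) (fun H => s ≤ runS (Strat.query e t1 t2) (insert e H))
            = mu p (R.erase e) (fun H => s - 1 ≤ runS t1 H) := by
          apply mu_congr
          intro H hH
          have hHsub : H ⊆ R.erase e := Finset.mem_powerset.1 hH
          have heH : e ∈ insert e H := Finset.mem_insert_self e H
          have hrun : runS (Strat.query e t1 t2) (insert e H) = 1 + runS t1 (insert e H) := by
            simp [runS]
          have hcongr : runS t1 (insert e H) = runS t1 H := by
            apply runS_congr hv1
            ext x
            simp only [Finset.mem_inter, Finset.mem_insert, Finset.mem_erase]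
            constructor
            · rintro ⟨hx | hx, hxe, hxR⟩
              · exact absurd hx hxe
              · exact ⟨hx, hxe, hxR⟩
            · rintro ⟨hx, hxe, hxR⟩
              exact ⟨Or.inr hx, hxe, hxR⟩
          rw [hrun, hcongr]
          omega
        rw [this]
        exact ih1 hv1
      have key2 : mu p (R.erase e) (fun H => s ≤ runS (Strat.query e t1 t2) H)
          ≤ binomTail p q' s := by
        have : mu p (R.erase e) (fun H => s ≤ runS (Strat.query e t1 t2) H)
            = mu p (R.erase e) (fun H => s ≤ runS t2 H) := by
          apply mu_congr
          intro H hH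
          have hHsub : H ⊆ R.erase e := Finset.mem_powerset.1 hH
          have heH : e ∉ H := fun h => hre (hHsub h)
          simp [runS, heH]
        rw [this]
        exact ih2 hv2
      unfold binomTail
      have hp1 : (0:ℝ) ≤ 1 - p := by linarith
      exact add_le_add (mul_le_mul_of_nonneg_left key1 h0)
        (mul_le_mul_of_nonneg_left key2 hp1)

/-- Chernoff bound for the binomial tail. -/
lemma binomTail_le_exp {p lam : ℝ} (h0 : 0 ≤ p) (h1 : p ≤ 1) (hlam : 0 ≤ lam) :
    ∀ q s, binomTail p q s ≤ Real.exp (-lam * s) * (1 - p + p * Real.exp lam) ^ q := by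
  have hM1 : (1:ℝ) ≤ 1 - p + p * Real.exp lam := by
    nlinarith [Real.one_le_exp hlam]
  have hM0 : (0:ℝ) ≤ 1 - p + p * Real.exp lam := by linarith
  intro q
  induction q with
  | zero =>
    intro s
    unfold binomTail
    rcases Nat.eq_zero_or_pos s with rfl | hs
    · simp
    · rw [if_neg (by omega)]
      positivity
  | succ q ih =>
    intro s
    unfold binomTail
    rcases Nat.eq_zero_or_pos s with rfl | hs
    · simp only [Nat.zero_sub]
      calc p * binomTail p q 0 + (1 - p) * binomTail p q 0
          = binomTail p q 0 := by ring
        _ = 1 := binomTail_zero q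
        _ ≤ Real.exp (-lam * (0:ℕ)) * (1 - p + p * Real.exp lam) ^ (q+1) := by
            rw [Nat.cast_zero, mul_zero, Real.exp_zero, one_mul]
            exact one_le_pow₀ hM1
    · have h1' : binomTail p q (s-1) ≤ Real.exp (-lam * (s-1:ℕ)) * (1 - p + p * Real.exp lam) ^ q :=
        ih (s-1)
      have h2' : binomTail p q s ≤ Real.exp (-lam * s) * (1 - p + p * Real.exp lam) ^ q := ih s
      have hc : ((s-1:ℕ):ℝ) = (s:ℝ) - 1 := by
        have : 1 ≤ s := hs
        push_cast [this]; ring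
      calc p * binomTail p q (s-1) + (1 - p) * binomTail p q s
          ≤ p * (Real.exp (-lam * (s-1:ℕ)) * (1 - p + p * Real.exp lam) ^ q)
            + (1 - p) * (Real.exp (-lam * s) * (1 - p + p * Real.exp lam) ^ q) := by
            apply add_le_add
            · exact mul_le_mul_of_nonneg_left h1' h0
            · exact mul_le_mul_of_nonneg_left h2' (by linarith)
        _ = Real.exp (-lam * s) * (1 - p + p * Real.exp lam) ^ q
              * (p * Real.exp lam + (1 - p)) := by
            rw [hc]
            rw [show -lam * ((s:ℝ) - 1) = -lam * s + lam by ring, Real.exp_add]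
            ring
        _ = Real.exp (-lam * s) * (1 - p + p * Real.exp lam) ^ (q+1) := by ring
end Generic

section Explore
variable {n : ℕ}

/-- Chain a list of queries, threading an accumulating state. -/
def buildQ {α σ : Type*} (upd : σ → α → σ) (cont : σ → Strat α) :
    List α → σ → Strat α
  | [], st => cont st
  | e :: rest, st => .query e (buildQ upd cont rest (upd st e)) (buildQ upd cont rest st)

lemma validQ {α σ : Type*} [DecidableEq α] (upd : σ → α → σ) (cont : σ → Strat α) :
    ∀ (qs : List α) (st : σ) (R : Finset α) (q : ℕ), qs.Nodup →
      (∀ e ∈ qs, e ∈ R) → (∀ st', ValidS (cont st') (R \ qs.toFinset) q) →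
      ValidS (buildQ upd cont qs st) R (qs.length + q) := by
  intro qs
  induction qs with
  | nil =>
    intro st R q _ _ hcont
    simpa [buildQ] using ValidS_mono (hcont st) (by simp) (by simp)
  | cons e rest ih =>
    intro st R q hnd hmem hcont
    simp only [buildQ, List.length_cons]
    have hnd' : rest.Nodup := (List.nodup_cons.1 hnd).2
    have hene : e ∉ rest := (List.nodup_cons.1 hnd).1
    have hmem' : ∀ e' ∈ rest, e' ∈ R.erase e := by
      intro e' he'
      exact Finset.mem_erase.2 ⟨fun h => hene (h ▸ he'), hmem e' (List.mem_cons_of_mem e he')⟩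
    have hcont' : ∀ st', ValidS (cont st') (R.erase e \ rest.toFinset) q := by
      intro st'
      apply ValidS_mono (hcont st') _ le_rfl
      intro x hx
      simp only [Finset.mem_sdiff, List.mem_toFinset, List.toFinset_cons,
        Finset.mem_insert, Finset.mem_erase] at *
      tauto
    have h1 := ih (upd st e) (R.erase e) q hnd' hmem' hcont'
    have h2 := ih st (R.erase e) q hnd' hmem' hcont'
    have : rest.length + q + 1 = (rest.length + 1 + q) := by omega
    rw [← this]
    exact ValidS.query (hmem e List.mem_cons_self) h1 h2

/-- The list of edges to query when exploring vertex `u`: all `k`-sets containing `u`,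
disjoint from the already-explored set `Ex`. -/
noncomputable def queries (k : ℕ) (u : Fin n) (Ex : Finset (Fin n)) :
    List (Finset (Fin n)) :=
  ((Finset.univ.powersetCard k).filter (fun e => u ∈ e ∧ Disjoint e Ex)).toList

/-- The BFS exploration strategy. -/
noncomputable def build (k : ℕ) : ℕ → Finset (Fin n) → Finset (Fin n) → Strat (Finset (Fin n))
  | 0, _, _ => .done
  | b + 1, Ex, D =>
    if h : (D \ Ex).Nonempty then
      buildQ (· ∪ ·) (fun D' => build k b (insert ((D \ Ex).min' h) Ex) D')
        (queries k ((D \ Ex).min' h) Ex) D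
    else .done

lemma mem_queries {k : ℕ} {u : Fin n} {Ex : Finset (Fin n)} {e : Finset (Fin n)} :
    e ∈ queries k u Ex ↔ e.card = k ∧ u ∈ e ∧ Disjoint e Ex := by
  simp [queries, Finset.mem_filter, Finset.mem_powersetCard_univ, and_assoc]

lemma queries_length_le {k : ℕ} (hk : 1 ≤ k) (u : Fin n) (Ex : Finset (Fin n)) :
    (queries k u Ex).length ≤ Nat.choose (n - 1) (k - 1) := by
  rw [queries, Finset.length_toList]
  have : ((Finset.univ.powersetCard k).filter (fun e => u ∈ e ∧ Disjoint e Ex)).card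
      ≤ ((Finset.univ.erase u).powersetCard (k - 1)).card := by
    apply Finset.card_le_card_of_injOn (fun e => e.erase u)
    · intro e he
      simp only [Finset.mem_coe, Finset.mem_filter, Finset.mem_powersetCard_univ] at he
      obtain ⟨hcard, hu, _⟩ := he
      apply Finset.mem_coe.2
      apply Finset.mem_powersetCard.2
      constructor
      · exact Finset.erase_subset_erase u (Finset.subset_univ e)
      · rw [Finset.card_erase_of_mem hu, hcard]
    · intro e he e' he' heq
      simp only [Finset.coe_filter, Set.mem_setOf_eq, Finset.mem_filter,
        Finset.mem_powersetCard_univ] at he he'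
      have hu : u ∈ e := he.2.1
      have hu' : u ∈ e' := he'.2.1
      simp only at heq
      rw [← Finset.insert_erase hu, ← Finset.insert_erase hu', heq]
  calc ((Finset.univ.powersetCard k).filter (fun e => u ∈ e ∧ Disjoint e Ex)).card
      ≤ ((Finset.univ.erase u).powersetCard (k-1)).card := this
    _ = Nat.choose (n - 1) (k - 1) := by
        rw [Finset.card_powersetCard, Finset.card_erase_of_mem (Finset.mem_univ u),
          Finset.card_univ, Fintype.card_fin]

lemma valid_build (k : ℕ) (hk : 1 ≤ k) :
    ∀ (b : ℕ) (Ex D : Finset (Fin n)),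
      ValidS (build k b Ex D)
        ((Finset.univ.powersetCard k).filter (fun e => Disjoint e Ex))
        (b * Nat.choose (n - 1) (k - 1)) := by
  intro b
  induction b with
  | zero => intro Ex D; exact ValidS.done _ _
  | succ b ih =>
    intro Ex D
    rw [build]
    split
    · rename_i h
      set u := (D \ Ex).min' h with hu
      apply ValidS_mono _ (le_refl _) (le_refl _)
      have hval := validQ (α := Finset (Fin n)) (σ := Finset (Fin n)) (· ∪ ·)
        (fun D' => build k b (insert u Ex) D') (queries k u Ex) D
        ((Finset.univ.powersetCard k).filter (fun e => Disjoint e Ex))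
        (b * Nat.choose (n - 1) (k - 1))
        (by rw [queries]; exact Finset.nodup_toList _)
        (by
          intro e he
          rw [mem_queries] at he
          simp only [Finset.mem_filter, Finset.mem_powersetCard_univ]
          exact ⟨he.1, he.2.2⟩)
        (by
          intro D'
          apply ValidS_mono (ih (insert u Ex) D') _ le_rfl
          intro e he
          simp only [Finset.mem_filter, Finset.mem_powersetCard_univ,
            Finset.mem_sdiff, List.mem_toFinset] at *
          obtain ⟨hcard, hdisj⟩ := he
          have hdEx : Disjoint e Ex := by
            apply Finset.disjoint_of_subset_right _ hdisj
            exact Finset.subset_insert u Ex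
          refine ⟨⟨hcard, hdEx⟩, ?_⟩
          rw [mem_queries]
          rintro ⟨_, hue, _⟩
          exact (Finset.disjoint_left.1 hdisj hue) (Finset.mem_insert_self u Ex))
      apply ValidS_mono hval le_rfl
      have := queries_length_le (n := n) hk u Ex
      calc (queries k u Ex).length + b * Nat.choose (n-1) (k-1)
          ≤ Nat.choose (n-1) (k-1) + b * Nat.choose (n-1) (k-1) := by omega
        _ = (b+1) * Nat.choose (n-1) (k-1) := by ring
    · exact ValidS.done _ _

end Explore

section Semantics
variable {n k : ℕ}

lemma runQ_bound (H : Finset (Finset (Fin n))) (u : Fin n)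
    (cont : Finset (Fin n) → Strat (Finset (Fin n))) :
    ∀ (qs : List (Finset (Fin n))), (∀ e ∈ qs, u ∈ e ∧ e.card = k) →
      ∀ D : Finset (Fin n), u ∈ D →
      ∃ (D' : Finset (Fin n)) (m : ℕ), D ⊆ D' ∧
        (∀ e ∈ qs, e ∈ H → e ⊆ D') ∧
        runS (buildQ (· ∪ ·) cont qs D) H = m + runS (cont D') H ∧
        D'.card ≤ D.card + (k - 1) * m := by
  intro qs
  induction qs with
  | nil =>
    intro _ D hu
    exact ⟨D, 0, Finset.Subset.refl D, by simp, by simp [buildQ], by simp⟩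
  | cons e rest ih =>
    intro hq D hu
    have he : u ∈ e ∧ e.card = k := hq e List.mem_cons_self
    have hq' : ∀ e' ∈ rest, u ∈ e' ∧ e'.card = k :=
      fun e' h => hq e' (List.mem_cons_of_mem e h)
    by_cases hH : e ∈ H
    · obtain ⟨D', m, hsub, hcov, hrun, hcard⟩ := ih hq' (D ∪ e) (Finset.mem_union_left e hu)
      refine ⟨D', m + 1, Finset.Subset.trans Finset.subset_union_left hsub, ?_, ?_, ?_⟩
      · intro e' he' _
        rcases List.mem_cons.1 he' with rfl | hmem
        · exact Finset.Subset.trans Finset.subset_union_right hsub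
        · exact hcov e' hmem ‹e' ∈ H›
      · simp only [buildQ, runS, if_pos hH, hrun]; omega
      · have hDe : (D ∪ e).card ≤ D.card + (k - 1) := by
          have h1 : D ∪ e = D ∪ (e \ D) := by
            rw [Finset.union_sdiff_self_eq_union]
          have h2 : Disjoint D (e \ D) := Finset.disjoint_sdiff
          have h3 : e \ D ⊆ e.erase u := by
            intro x hx
            rw [Finset.mem_sdiff] at hx
            exact Finset.mem_erase.2 ⟨fun hxu => hx.2 (hxu ▸ hu), hx.1⟩
          have h4 : (e \ D).card ≤ k - 1 := by
            calc (e \ D).card ≤ (e.erase u).card := Finset.card_le_card h3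
              _ = k - 1 := by rw [Finset.card_erase_of_mem he.1, he.2]
          rw [h1, Finset.card_union_of_disjoint h2]
          omega
        calc D'.card ≤ (D ∪ e).card + (k-1) * m := hcard
          _ ≤ D.card + (k-1) + (k-1)*m := by omega
          _ = D.card + (k-1) * (m+1) := by ring
    · obtain ⟨D', m, hsub, hcov, hrun, hcard⟩ := ih hq' D hu
      refine ⟨D', m, hsub, ?_, ?_, hcard⟩
      · intro e' he' hH'
        rcases List.mem_cons.1 he' with rfl | hmem
        · exact absurd hH' hH
        · exact hcov e' hmem hH'
      · simp only [buildQ, runS, if_neg hH, hrun]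

lemma component_subset_closed {H : Finset (Finset (Fin n))} {v : Fin n}
    {D : Finset (Fin n)} (hv : v ∈ D)
    (hcl : ∀ e ∈ H, ∀ w ∈ D, w ∈ e → e ⊆ D) :
    component H v ⊆ ↑D := by
  intro w hw
  simp only [component, Set.mem_setOf_eq] at hw
  induction hw with
  | refl => exact hv
  | tail _ htouch ih =>
    obtain ⟨e, heH, hbe, hce⟩ := htouch
    exact hcl e heH _ ih hbe hce

lemma run_build_bound (H : Finset (Finset (Fin n))) (hH : ∀ e ∈ H, e.card = k)
    (v : Fin n) :
    ∀ (b : ℕ) (Ex D : Finset (Fin n)), Ex ⊆ D → v ∈ D →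
      (∀ e ∈ H, ∀ u ∈ Ex, u ∈ e → e ⊆ D) →
      min (Ex.card + b) (component H v).ncard
        ≤ (k - 1) * runS (build k b Ex D) H + D.card := by
  intro b
  induction b with
  | zero =>
    intro Ex D h1 _ _
    calc min (Ex.card + 0) (component H v).ncard ≤ Ex.card := by omega
      _ ≤ D.card := Finset.card_le_card h1
      _ ≤ (k-1) * runS (build k 0 Ex D) H + D.card := by omega
  | succ b ih =>
    intro Ex D h1 h2 h3
    rw [build]
    split
    · rename_i hfr
      set u := (D \ Ex).min' hfr with hu_def
      have hu : u ∈ D \ Ex := Finset.min'_mem _ hfr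
      have huD : u ∈ D := (Finset.mem_sdiff.1 hu).1
      have huEx : u ∉ Ex := (Finset.mem_sdiff.1 hu).2
      obtain ⟨D', m, hsub, hcov, hrun, hcard⟩ :=
        runQ_bound H u (fun D' => build k b (insert u Ex) D') (queries k u Ex)
          (fun e he => ⟨(mem_queries.1 he).2.1, (mem_queries.1 he).1⟩) D huD
      have hstep := ih (insert u Ex) D' (by
          apply Finset.insert_subset (hsub huD)
          exact Finset.Subset.trans h1 hsub)
        (hsub h2)
        (by
          intro e heH w hw hwe
          rcases Finset.mem_insert.1 hw with rfl | hwEx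
          · -- w = u
            by_cases hEx : Disjoint e Ex
            · have : e ∈ queries k u Ex := mem_queries.2 ⟨hH e heH, hwe, hEx⟩
              exact hcov e this heH
            · rw [Finset.not_disjoint_iff] at hEx
              obtain ⟨a, hae, haEx⟩ := hEx
              exact Finset.Subset.trans (h3 e heH a haEx hae) hsub
          · exact Finset.Subset.trans (h3 e heH w hwEx hwe) hsub)
      rw [Finset.card_insert_of_notMem huEx] at hstep
      rw [hrun]
      calc min (Ex.card + (b+1)) (component H v).ncard
          = min (Ex.card + 1 + b) (component H v).ncard := by omega
        _ ≤ (k-1) * runS (build k b (insert u Ex) D') H + D'.card := hstep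
        _ ≤ (k-1) * runS (build k b (insert u Ex) D') H + D.card + (k-1)*m := by omega
        _ = (k-1) * (m + runS (build k b (insert u Ex) D') H) + D.card := by ring
    · -- stuck: D \ Ex = ∅, so D ⊆ Ex, hence component ⊆ D
      rename_i hfr
      have hDEx : D ⊆ Ex := by
        rw [Finset.not_nonempty_iff_eq_empty, Finset.sdiff_eq_empty_iff_subset] at hfr
        exact hfr
      have hcomp : component H v ⊆ ↑D := by
        apply component_subset_closed h2
        intro e heH w hwD hwe
        exact h3 e heH w (hDEx hwD) hwe
      have : (component H v).ncard ≤ D.card := by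
        calc (component H v).ncard ≤ (↑D : Set (Fin n)).ncard :=
              Set.ncard_le_ncard hcomp (Set.toFinite _)
          _ = D.card := by rw [Set.ncard_coe_finset]
      simp only [runS]
      omega

end Semantics

section Main

lemma probHnp_eq_mu (n k : ℕ) (p : ℝ) (A : Finset (Finset (Fin n)) → Prop) :
    probHnp n k p A = mu p (Finset.univ.powersetCard k) A := by
  have hKcard : (Finset.univ.powersetCard k : Finset (Finset (Fin n))).card
      = Nat.choose n k := by
    rw [Finset.card_powersetCard, Finset.card_univ, Fintype.card_fin]
  rw [probHnp, mu]
  rw [← Finset.sum_subset (Finset.subset_univ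
    ((Finset.univ.powersetCard k : Finset (Finset (Fin n))).powerset))]
  · apply Finset.sum_congr rfl
    intro H hH
    have hsub : H ⊆ Finset.univ.powersetCard k := Finset.mem_powerset.1 hH
    have huni : IsUniform k H := by
      intro e he
      exact (Finset.mem_powersetCard_univ.1 (hsub he))
    rw [hKcard]
    by_cases hA : A H
    · rw [if_pos ⟨huni, hA⟩, if_pos hA]
    · rw [if_neg (fun h => hA h.2), if_neg hA]
  · intro H _ hH
    rw [if_neg]
    rintro ⟨huni, _⟩
    apply hH
    rw [Finset.mem_powerset]
    intro e he
    exact Finset.mem_powersetCard_univ.2 (huni e he)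

lemma exp_le_quad {x : ℝ} (h0 : 0 ≤ x) (h04 : x ≤ 0.4) :
    Real.exp x ≤ 1 + x + 0.59 * x ^ 2 := by
  have hx1 : |x| ≤ 1 := by rw [abs_of_nonneg h0]; linarith
  have hb := Real.exp_bound hx1 (n := 3) (by norm_num)
  have hsum : ∑ m ∈ Finset.range 3, x ^ m / m.factorial = 1 + x + x ^ 2 / 2 := by
    norm_num [Finset.sum_range_succ, Nat.factorial]
  rw [hsum, abs_of_nonneg h0] at hb
  have hb' : Real.exp x - (1 + x + x ^ 2 / 2) ≤ x ^ 3 * ((3:ℕ).succ / ((3:ℕ).factorial * 3)) :=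
    le_trans (le_abs_self _) hb
  have h3 : (((3:ℕ).succ : ℝ) / ((3:ℕ).factorial * 3) : ℝ) = 2 / 9 := by
    norm_num [Nat.factorial]
  rw [h3] at hb'
  nlinarith [mul_le_mul_of_nonneg_right h04 (sq_nonneg x), sq_nonneg x, pow_nonneg h0 3]

/-- For `0 < ε < 1/2`, `k ≥ 2`, `n > 200k²/ε`,
`p = (1 - 0.8ε)·(k-2)!/n^{k-1}` and a fixed vertex `v`, in `H_{n,p;k}` the probability
that the component of `v` has more than `(16k/ε²)·log n` vertices is less than `n⁻²`. -/
theorem one_component_small (ε : ℝ) (hε0 : 0 < ε) (hε : ε < 1 / 2)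
    (k : ℕ) (hk : 2 ≤ k) (n : ℕ) (hn : (200 : ℝ) * k ^ 2 / ε < n) (v : Fin n) :
    probHnp n k ((1 - 0.8 * ε) * (Nat.factorial (k - 2)) / (n : ℝ) ^ (k - 1))
        (fun H => 16 * k / ε ^ 2 * Real.log n < ((component H v).ncard : ℝ))
      < ((n : ℝ) ^ 2)⁻¹ := by
  obtain ⟨m, rfl⟩ : ∃ m, k = m + 2 := ⟨k - 2, by omega⟩
  clear hk
  set k := m + 2 with hk_def
  have hmk1 : k - 1 = m + 1 := by omega
  have hmk2 : k - 2 = m := by omega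
  set x : ℝ := 0.8 * ε with hx_def
  have hx0 : 0 < x := by positivity
  have hx04 : x < 0.4 := by rw [hx_def]; linarith
  set p : ℝ := (1 - 0.8 * ε) * (Nat.factorial (k - 2)) / (n : ℝ) ^ (k - 1) with hp_def
  have hkR : (2:ℝ) ≤ (k : ℝ) := by
    rw [hk_def]; push_cast; linarith [Nat.cast_nonneg (α := ℝ) m]
  -- basic bounds on n
  have hnR : (1600 : ℝ) < n := by
    have h1 : (1600:ℝ) ≤ 200 * (k:ℝ)^2 / ε := by
      rw [le_div_iff₀ hε0]
      nlinarith
    linarith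
  have hn0 : (0:ℝ) < n := by linarith
  have hnN : 1600 < n := by exact_mod_cast hnR
  have hlogn : 1 ≤ Real.log n := by
    rw [Real.le_log_iff_exp_le hn0]
    calc Real.exp 1 ≤ 2.7182818286 := le_of_lt Real.exp_one_lt_d9
      _ ≤ (n:ℝ) := by linarith
  have hlogn0 : 0 ≤ Real.log n := by linarith
  have hkn : k < n := by
    have h1 : (k:ℝ) ≤ 200 * (k:ℝ)^2 / ε := by
      rw [le_div_iff₀ hε0]
      nlinarith
    have : (k:ℝ) < (n:ℝ) := by linarith
    exact_mod_cast this
  -- bounds on p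
  have h1x0 : (0:ℝ) < 1 - x := by linarith
  have hnpow_pos : (0:ℝ) < (n:ℝ) ^ (k - 1) := by positivity
  have hp0 : 0 ≤ p := by
    rw [hp_def]
    have : (0:ℝ) ≤ 1 - 0.8 * ε := by rw [hx_def] at h1x0; linarith
    positivity
  have hp1 : p ≤ 1 := by
    rw [hp_def, div_le_one hnpow_pos]
    have hfac : (Nat.factorial (k - 2) : ℝ) ≤ (n:ℝ) ^ (k - 1) := by
      have h1 : Nat.factorial (k-2) ≤ (k-2) ^ (k-2) := Nat.factorial_le_pow _
      have h2 : (k-2) ^ (k-2) ≤ n ^ (k-2) := Nat.pow_le_pow_left (by omega) _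
      have h3 : n ^ (k-2) ≤ n ^ (k-1) := Nat.pow_le_pow_right (by omega) (by omega)
      have : Nat.factorial (k-2) ≤ n ^ (k-1) := le_trans h1 (le_trans h2 h3)
      exact_mod_cast this
    have h08 : (1 - 0.8 * ε) ≤ 1 := by linarith
    nlinarith [Nat.cast_nonneg (α := ℝ) (Nat.factorial (k-2))]
  -- the threshold
  set L : ℝ := 16 * (k:ℝ) / ε ^ 2 * Real.log n with hL_def
  have hL0 : 0 ≤ L := by
    rw [hL_def]
    positivity
  set l : ℕ := Nat.floor L + 1 with hl_def
  have hlL : L < l := by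
    rw [hl_def]; push_cast; exact Nat.lt_floor_add_one L
  have hl1 : 1 ≤ l := by omega
  set s : ℕ := (l - 1 + m) / (m + 1) with hs_def
  set q : ℕ := l * Nat.choose (n - 1) (k - 1) with hq_def
  set K : Finset (Finset (Fin n)) := Finset.univ.powersetCard k with hK_def
  set strat : Strat (Finset (Fin n)) := build k l ∅ {v} with hstrat_def
  clear_value strat
  clear_value k x p L l s q K
  -- step 1: event implies many successes
  have himp : ∀ H ∈ K.powerset,
      (L < ((component H v).ncard : ℝ)) → s ≤ runS strat H := by
    intro H hH hA
    rw [hK_def] at hH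
    have hHuni : ∀ e ∈ H, e.card = k := by
      intro e he
      exact Finset.mem_powersetCard_univ.1 ((Finset.mem_powerset.1 hH) he)
    have hncard : l ≤ (component H v).ncard := by
      have : Nat.floor L < (component H v).ncard := (Nat.floor_lt hL0).2 hA
      omega
    have hrb := run_build_bound H hHuni v l ∅ ({v} : Finset (Fin n))
      (Finset.empty_subset _) (Finset.mem_singleton_self v)
      (by intro e _ u hu; exact absurd hu (Finset.notMem_empty u))
    rw [← hstrat_def] at hrb
    rw [Finset.card_empty, Finset.card_singleton] at hrb
    have hmin : min (0 + l) (component H v).ncard = l := by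
      rw [zero_add]; exact min_eq_left hncard
    rw [hmin] at hrb
    -- hrb : l ≤ (k-1) * runS (build k l ∅ {v}) H + 1
    rw [hmk1] at hrb
    have hlt : l - 1 + m < (runS strat H + 1) * (m + 1) := by
      have hexp : (runS strat H + 1) * (m + 1) = (m + 1) * runS strat H + (m + 1) := by ring
      rw [hexp]
      omega
    have h2 : (l - 1 + m) / (m + 1) < runS strat H + 1 :=
      (Nat.div_lt_iff_lt_mul (by omega : 0 < m + 1)).2 hlt
    rw [hs_def]
    omega
  -- step 2: probability chain
  rw [probHnp_eq_mu, ← hK_def]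
  have hchain1 : mu p K (fun H => L < ((component H v).ncard : ℝ))
      ≤ mu p K (fun H => s ≤ runS strat H) := mu_mono hp0 hp1 himp
  have hvalid : ValidS strat K q := by
    have h := valid_build (n := n) k (by omega) l ∅ ({v} : Finset (Fin n))
    have hfe : (Finset.univ.powersetCard k).filter
        (fun e => Disjoint e (∅ : Finset (Fin n))) = K := by
      rw [hK_def]
      apply Finset.filter_true_of_mem
      intro e _
      exact Finset.disjoint_empty_right e
    rw [hfe, ← hstrat_def, ← hq_def] at h
    exact h
  have hchain2 : mu p K (fun H => s ≤ runS strat H) ≤ binomTail p q s :=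
    dom hp0 hp1 hvalid
  have hchain3 : binomTail p q s ≤ Real.exp (-x * s) * (1 - p + p * Real.exp x) ^ q :=
    binomTail_le_exp hp0 hp1 hx0.le q s
  have hchain4 : Real.exp (-x * s) * (1 - p + p * Real.exp x) ^ q
      ≤ Real.exp ((q : ℝ) * (p * (Real.exp x - 1)) - x * s) := by
    have hbase : 1 - p + p * Real.exp x ≤ Real.exp (p * (Real.exp x - 1)) := by
      have h := Real.add_one_le_exp (p * (Real.exp x - 1))
      nlinarith
    have hbase0 : (0:ℝ) ≤ 1 - p + p * Real.exp x := by
      nlinarith [Real.one_le_exp hx0.le]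
    calc Real.exp (-x * s) * (1 - p + p * Real.exp x) ^ q
        ≤ Real.exp (-x * s) * (Real.exp (p * (Real.exp x - 1))) ^ q := by
          apply mul_le_mul_of_nonneg_left _ (Real.exp_nonneg _)
          exact pow_le_pow_left₀ hbase0 hbase q
      _ = Real.exp ((q : ℝ) * (p * (Real.exp x - 1)) - x * s) := by
          rw [← Real.exp_nat_mul, ← Real.exp_add]
          ring_nf
  -- step 3: numeric bound on the exponent
  have hek : Real.exp x - 1 ≥ 0 := by nlinarith [Real.one_le_exp hx0.le]
  -- q * p ≤ l * (1 - x) / (m + 1)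
  have hqp : (q:ℝ) * p ≤ (l:ℝ) * (1 - x) / (m + 1 : ℝ) := by
    have hdesc : (Nat.choose (n-1) (k-1)) * Nat.factorial (k - 2) * (m + 1) ≤ n ^ (k-1) := by
      rw [hmk1, hmk2]
      have h1 : Nat.choose (n-1) (m+1) * Nat.factorial m * (m + 1)
          = Nat.factorial (m+1) * Nat.choose (n-1) (m+1) := by
        rw [Nat.factorial_succ]; ring
      rw [h1, ← Nat.descFactorial_eq_factorial_mul_choose]
      calc (n-1).descFactorial (m+1) ≤ (n-1) ^ (m+1) := Nat.descFactorial_le_pow _ _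
        _ ≤ n ^ (m+1) := Nat.pow_le_pow_left (by omega) _
    have hdescR : ((Nat.choose (n-1) (k-1)) : ℝ) * (Nat.factorial (k - 2)) * ((m:ℝ) + 1)
        ≤ (n:ℝ) ^ (k-1) := by exact_mod_cast hdesc
    have hqR : (q:ℝ) = (l:ℝ) * (Nat.choose (n-1) (k-1) : ℝ) := by
      rw [hq_def]; push_cast; ring
    rw [hqR, hp_def, ← hx_def]
    have hrw : (l:ℝ) * (Nat.choose (n-1) (k-1) : ℝ)
        * ((1 - x) * (Nat.factorial (k-2) : ℝ) / (n:ℝ) ^ (k-1))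
        = ((l:ℝ) * (1 - x) * ((Nat.choose (n-1) (k-1) : ℝ) * (Nat.factorial (k-2) : ℝ)))
          / (n:ℝ) ^ (k-1) := by ring
    rw [hrw, div_le_div_iff₀ hnpow_pos (by positivity : (0:ℝ) < (m:ℝ) + 1)]
    have hl0 : (0:ℝ) ≤ (l:ℝ) := Nat.cast_nonneg l
    calc (l:ℝ) * (1 - x) * ((Nat.choose (n-1) (k-1) : ℝ) * (Nat.factorial (k-2) : ℝ))
          * ((m:ℝ) + 1)
        = (l:ℝ) * (1 - x) * ((Nat.choose (n-1) (k-1) : ℝ) * (Nat.factorial (k-2) : ℝ)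
          * ((m:ℝ)+1)) := by ring
      _ ≤ (l:ℝ) * (1 - x) * ((n:ℝ) ^ (k-1)) := by
          apply mul_le_mul_of_nonneg_left hdescR
          positivity
  -- x * s ≥ x * (l - 1) / (m + 1)
  have hms : l - 1 ≤ (m + 1) * s := by
    have h := Nat.div_add_mod (l - 1 + m) (m + 1)
    have h2 : (l - 1 + m) % (m + 1) < m + 1 := Nat.mod_lt _ (Nat.succ_pos m)
    rw [hs_def]
    omega
  have hmsN : l ≤ (m + 1) * s + 1 := by omega
  have hmsR : ((l:ℝ) - 1) ≤ ((m:ℝ) + 1) * s := by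
    have h' : (l:ℝ) ≤ ((m:ℝ) + 1) * (s:ℝ) + 1 := by exact_mod_cast hmsN
    linarith
  have hxs : x * ((l:ℝ) - 1) / ((m:ℝ) + 1) ≤ x * s := by
    rw [div_le_iff₀ (by positivity)]
    nlinarith
  -- exponent bound
  have hexpq : Real.exp x ≤ 1 + x + 0.59 * x ^ 2 := exp_le_quad hx0.le hx04.le
  have hquad : (1 - x) * (Real.exp x - 1) - x ≤ -(0.4 * x ^ 2) := by
    nlinarith [pow_nonneg hx0.le 3, sq_nonneg x]
  have hE : (q:ℝ) * (p * (Real.exp x - 1)) - x * s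
      ≤ ((l:ℝ) * ((1 - x) * (Real.exp x - 1) - x) + x) / ((m:ℝ) + 1) := by
    have h1 : (q:ℝ) * (p * (Real.exp x - 1)) ≤ ((l:ℝ) * (1 - x) / ((m:ℝ)+1)) *
        (Real.exp x - 1) := by
      have := mul_le_mul_of_nonneg_right hqp hek
      calc (q:ℝ) * (p * (Real.exp x - 1)) = (q:ℝ) * p * (Real.exp x - 1) := by ring
        _ ≤ ((l:ℝ) * (1 - x) / ((m:ℝ)+1)) * (Real.exp x - 1) := this
    have h2 : ((l:ℝ) * (1 - x) / ((m:ℝ)+1)) * (Real.exp x - 1) - x * ((l:ℝ) - 1) / ((m:ℝ) + 1)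
        = ((l:ℝ) * ((1 - x) * (Real.exp x - 1) - x) + x) / ((m:ℝ) + 1) := by
      field_simp
      ring
    linarith
  have hlepos : 16 * (k:ℝ) * Real.log n < ε ^ 2 * l := by
    have h := hlL
    rw [hL_def] at h
    have h2 : 16 * (k:ℝ) / ε ^ 2 * Real.log n * ε ^ 2 = 16 * (k:ℝ) * Real.log n := by
      field_simp
    have h3 := mul_lt_mul_of_pos_right h (by positivity : (0:ℝ) < ε ^ 2)
    rw [h2] at h3
    linarith
  have hfinal : ((l:ℝ) * ((1 - x) * (Real.exp x - 1) - x) + x) / ((m:ℝ) + 1)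
      < -(2 * Real.log n) := by
    rw [div_lt_iff₀ (by positivity)]
    have hl0 : (0:ℝ) ≤ (l:ℝ) := Nat.cast_nonneg l
    have hstep : (l:ℝ) * ((1 - x) * (Real.exp x - 1) - x) ≤ (l:ℝ) * (-(0.4 * x ^ 2)) :=
      mul_le_mul_of_nonneg_left hquad hl0
    have hx2 : x ^ 2 = 0.64 * ε ^ 2 := by rw [hx_def]; ring
    have hkm : (k:ℝ) = (m:ℝ) + 2 := by rw [hk_def]; push_cast; ring
    have hklog : 2 * Real.log n ≤ (k:ℝ) * Real.log n := by nlinarith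
    -- goal : l * (...) + x < -(2 * log n) * (m + 1)
    have hkey : 16 * (k:ℝ) * Real.log n < ε^2 * l := hlepos
    nlinarith [mul_le_mul_of_nonneg_left hlogn (le_trans (by norm_num : (0:ℝ) ≤ 2) hkR),
      mul_pos hε0 hε0]
  -- conclude
  have hlt : Real.exp ((q:ℝ) * (p * (Real.exp x - 1)) - x * s) < ((n:ℝ) ^ 2)⁻¹ := by
    have h1 : Real.exp ((q:ℝ) * (p * (Real.exp x - 1)) - x * s)
        < Real.exp (-(2 * Real.log n)) := by
      apply Real.exp_lt_exp.2
      linarith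
    have h2 : Real.exp (-(2 * Real.log n)) = ((n:ℝ) ^ 2)⁻¹ := by
      rw [Real.exp_neg]
      congr 1
      rw [show (2:ℝ) * Real.log n = Real.log ((n:ℝ) ^ (2:ℕ)) from by
        rw [Real.log_pow]; norm_num]
      rw [Real.exp_log (by positivity)]
    linarith
  exact lt_of_le_of_lt (hchain1.trans (hchain2.trans (hchain3.trans hchain4))) hlt

end Main
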